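/- arXiv:2605.08457 — 2 statements merged into one kernel-verified Lean document; each statement's English description precedes it below -/
import Mathlib

section
/- (Collapsing colors is a chain map.) Let σ : W → X be a surjection of finite sets, (C, ρ) a bounded-above R_W-chain complex over F = ℤ/2ℤ, and give C the R_X-structure ρ∘R_σ. Let C̄_X = C⊗R_X⊗Ξ_X and C̄_W = C⊗R_W⊗Ξ_W be the preferred free resolutions with their differentials. Then σ̄ := Id_C ⊗ R_σ ⊗ Ξ_σ : C̄_X → C̄_W is an R_X-linear chain map, where R_X acts on C̄_W through R_σ. -/
/-!
STATEMENT 10 (Collapsing colors is a chain map): Let σ : W → X be a surjection of finite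
sets, (C, ρ) a bounded-above R_W-chain complex over F = ℤ/2ℤ (given by a differential d
and commuting square-zero chain operators ρ(w)), and give C the R_X-structure ρ∘R_σ
(the generator x acts as Σ_{σ(w)=x} ρ(w)).  Let C̄_X = C⊗R_X⊗Ξ_X and C̄_W = C⊗R_W⊗Ξ_W
be the preferred free resolutions.  Then σ̄ = Id_C ⊗ R_σ ⊗ Ξ_σ : C̄_X → C̄_W is an
R_X-linear chain map, where R_X acts on C̄_W through R_σ.
-/

set_option synthInstance.maxHeartbeats 1000000
set_option maxHeartbeats 1000000

noncomputable section
open scoped TensorProduct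

abbrev F2 := ZMod 2

abbrev Rgen (Y : Type) : Type :=
  MvPolynomial Y F2 ⧸
    Ideal.span (Set.range fun y : Y => (MvPolynomial.X y : MvPolynomial Y F2) ^ 2)

def rgen {Y : Type} (y : Y) : Rgen Y := Ideal.Quotient.mk _ (MvPolynomial.X y)

abbrev XiX (Y : Type) : Type := (Y →₀ ℕ) →₀ F2

def ximon {Y : Type} (n : Y →₀ ℕ) : XiX Y := Finsupp.single n 1

def xiMul {Y : Type} [DecidableEq Y] (y : Y) : XiX Y →ₗ[F2] XiX Y :=
  Finsupp.lsum F2 fun n =>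
    if n y = 0 then (0 : F2 →ₗ[F2] XiX Y)
    else Finsupp.lsingle (n - Finsupp.single y 1)

def IsBddAboveComplex (C : Type) [AddCommGroup C] [Module F2 C]
    (d : C →ₗ[F2] C) : Prop :=
  d.comp d = 0 ∧
  ∃ Cdeg : ℤ → Submodule F2 C,
    DirectSum.IsInternal Cdeg ∧
    (∃ N : ℤ, ∀ n : ℤ, N < n → Cdeg n = ⊥) ∧
    ∀ n : ℤ, ∀ c ∈ Cdeg n, d c ∈ Cdeg (n + 1)

variable (Y : Type) [Fintype Y] [DecidableEq Y]
variable (C : Type) [AddCommGroup C] [Module F2 C]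

/-- The preferred free resolution `C̄_Y = (R_Y ⊗ Ξ_Y) ⊗ C`. -/
abbrev CbarY : Type := (Rgen Y ⊗[F2] XiX Y) ⊗[F2] C

/-- The differential of the preferred free resolution of `(C, d, act)` over `R_Y`:
`∂_C⊗1⊗1 + Σ_y (act(y)⊗1 + 1⊗y)⊗ξ_y`. -/
def delBar (d : C →ₗ[F2] C) (act : Y → C →ₗ[F2] C) : CbarY Y C →ₗ[F2] CbarY Y C :=
  TensorProduct.map LinearMap.id d +
    ∑ y : Y,
      (TensorProduct.map
          (TensorProduct.map (LinearMap.mulLeft F2 (rgen y)) (xiMul y)) LinearMap.id +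
        TensorProduct.map (TensorProduct.map LinearMap.id (xiMul y)) (act y))

/-- Multiplication by `r ∈ R_Y` on the middle factor of `C̄_Y`. -/
def midMul (r : Rgen Y) : CbarY Y C →ₗ[F2] CbarY Y C :=
  TensorProduct.map
    (TensorProduct.map (LinearMap.mulLeft F2 r) LinearMap.id) LinearMap.id

-- ===== aux start =====
section Aux

lemma xiMul_ximon {Y : Type} [DecidableEq Y] (y : Y) (n : Y →₀ ℕ) :
    xiMul y (ximon n) =
      if n y = 0 then 0 else ximon (n - Finsupp.single y 1) := by
  simp only [xiMul, ximon, Finsupp.lsum_single]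
  split_ifs with h
  · simp
  · simp [ximon, Finsupp.lsingle_apply]

lemma rgen_sq_zero {Y : Type} (y : Y) : rgen (Y := Y) y ^ 2 = 0 := by
  rw [rgen, ← map_pow, Ideal.Quotient.eq_zero_iff_mem]
  exact Ideal.subset_span ⟨y, rfl⟩

lemma two_eq_zero_Rgen (Y : Type) : (2 : Rgen Y) = 0 := by
  have h2 : (2 : F2) = 0 := by decide
  calc (2 : Rgen Y) = algebraMap F2 (Rgen Y) (2 : F2) := (map_ofNat _ 2).symm
    _ = 0 := by rw [h2, map_zero]

lemma sq_sum_zero {R : Type*} [CommRing R] (h2 : (2 : R) = 0) {ι : Type*}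
    (s : Finset ι) (f : ι → R) (hf : ∀ i, f i ^ 2 = 0) :
    (∑ i ∈ s, f i) ^ 2 = 0 := by
  classical
  induction s using Finset.induction_on with
  | empty => simp
  | insert _ _ hm ih =>
    rw [Finset.sum_insert hm, add_sq, ih, hf, h2]
    ring

variable {W X : Type} [Fintype W] [DecidableEq W] [DecidableEq X]

/-- The algebra map `R_X → R_W` collapsing colors. -/
def RSigma (σ : W → X) : Rgen X →ₐ[F2] Rgen W :=
  Ideal.Quotient.liftₐ _
    (MvPolynomial.aeval fun x : X =>
      ∑ w ∈ Finset.univ.filter (fun w => σ w = x), rgen w)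
    (by
      intro a ha
      refine (Ideal.span_le (I := RingHom.ker
        (MvPolynomial.aeval (R := F2) fun x : X =>
          ∑ w ∈ Finset.univ.filter (fun w => σ w = x), rgen w).toRingHom)).mpr ?_ ha
      rintro p ⟨x, rfl⟩
      simp only [SetLike.mem_coe, RingHom.mem_ker, AlgHom.toRingHom_eq_coe,
        RingHom.coe_coe, map_pow, MvPolynomial.aeval_X]
      exact sq_sum_zero (two_eq_zero_Rgen W) _ _ (fun w => rgen_sq_zero w))

lemma RSigma_rgen (σ : W → X) (x : X) :
    RSigma σ (rgen x) = ∑ w ∈ Finset.univ.filter (fun w => σ w = x), rgen w := by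
  simp [RSigma, rgen, Ideal.Quotient.liftₐ_apply, Ideal.Quotient.lift_mk]
  exact MvPolynomial.aeval_X (fun x : X => ∑ w ∈ Finset.univ.filter (fun w => σ w = x), rgen w) x

lemma mapDomain_apply_ge (σ : W → X) (m : W →₀ ℕ) (w : W) :
    m w ≤ Finsupp.mapDomain σ m (σ w) := by
  by_cases hw : m w = 0
  · simp [hw]
  · rw [Finsupp.mapDomain, Finsupp.sum_apply]
    have hmem : w ∈ m.support := Finsupp.mem_support_iff.mpr hw
    refine (Finset.single_le_sum (f := fun a => (Finsupp.single (σ a) (m a)) (σ w))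
      (fun a _ => Nat.zero_le _) hmem).trans_eq' ?_
    simp

def fiberSet (σ : W → X) (n : X →₀ ℕ) : Set (W →₀ ℕ) :=
  {m | Finsupp.mapDomain σ m = n}

lemma fiber_finite (σ : W → X) (n : X →₀ ℕ) : (fiberSet σ n).Finite := by
  have h1 : fiberSet σ n ⊆
      Finsupp.equivFunOnFinite ⁻¹' (Set.univ.pi fun w : W => Set.Iic (n (σ w))) := by
    intro m hm
    intro w _
    simpa [Set.mem_Iic] using (mapDomain_apply_ge σ m w).trans_eq (by rw [hm])
  exact Set.Finite.subset
    ((Set.Finite.pi fun w => Set.finite_Iic _).preimage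
      (Finsupp.equivFunOnFinite.injective.injOn)) h1

def Tfin (σ : W → X) (n : X →₀ ℕ) : Finset (W →₀ ℕ) := (fiber_finite σ n).toFinset

lemma mem_Tfin {σ : W → X} {n : X →₀ ℕ} {m : W →₀ ℕ} :
    m ∈ Tfin σ n ↔ Finsupp.mapDomain σ m = n := by
  simp [Tfin, fiberSet, Set.Finite.mem_toFinset]

/-- The map `Ξ_σ : Ξ_X → Ξ_W`. -/
def XiSigma (σ : W → X) : XiX X →ₗ[F2] XiX W :=
  Finsupp.lsum F2 fun n =>
    LinearMap.toSpanSingleton F2 _ (∑ m ∈ Tfin σ n, ximon m)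

lemma XiSigma_ximon (σ : W → X) (n : X →₀ ℕ) :
    XiSigma σ (ximon n) = ∑ m ∈ Tfin σ n, ximon m := by
  simp [XiSigma, ximon, Finsupp.lsum_single, LinearMap.toSpanSingleton_apply]

lemma XiSigma_spec (σ : W → X) (n : X →₀ ℕ) :
    XiSigma σ (ximon n) = ∑ᶠ m ∈ {m : W →₀ ℕ | Finsupp.mapDomain σ m = n}, ximon m := by
  rw [XiSigma_ximon]
  exact (finsum_mem_eq_finite_toFinset_sum _ (fiber_finite σ n)).symm

lemma xiMul_XiSigma (σ : W → X) (w : W) (q : XiX X) :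
    xiMul w (XiSigma σ q) = XiSigma σ (xiMul (σ w) q) := by
  have : (xiMul w).comp (XiSigma σ) = (XiSigma σ).comp (xiMul (σ w)) := by
    apply Finsupp.lhom_ext
    intro n b
    have hb : (Finsupp.single n b : XiX X) = b • ximon n := by
      simp [ximon, Finsupp.smul_single]
    simp only [LinearMap.comp_apply, hb, map_smul]
    congr 1
    rw [XiSigma_ximon, xiMul_ximon, map_sum]
    by_cases h : n (σ w) = 0
    · rw [if_pos h, map_zero]
      refine Finset.sum_eq_zero fun m hm => ?_
      have hmw : m w = 0 := by
        have := mapDomain_apply_ge σ m w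
        rw [mem_Tfin.mp hm, h] at this
        omega
      rw [xiMul_ximon, if_pos hmw]
    · rw [if_neg h, XiSigma_ximon]
      have key : ∀ m ∈ Tfin σ n, xiMul w (ximon m) =
          if m w = 0 then 0 else ximon (m - Finsupp.single w 1) :=
        fun m _ => xiMul_ximon w m
      rw [Finset.sum_congr rfl key]
      have hswap : ∀ m : W →₀ ℕ, (if m w = 0 then (0 : XiX W) else ximon (m - Finsupp.single w 1))
          = if ¬ m w = 0 then ximon (m - Finsupp.single w 1) else 0 := fun m => (ite_not _ _ _).symm
      rw [Finset.sum_congr rfl fun m _ => hswap m, ← Finset.sum_filter]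
      refine Finset.sum_bij' (fun m _ => m - Finsupp.single w 1)
        (fun m' _ => m' + Finsupp.single w 1) ?_ ?_ ?_ ?_ ?_
      · intro m hm
        rw [Finset.mem_filter] at hm
        obtain ⟨hm1, hm2⟩ := hm
        have hle : Finsupp.single w 1 ≤ m := Finsupp.single_le_iff.mpr (by omega)
        rw [mem_Tfin]
        have hrec : (m - Finsupp.single w 1) + Finsupp.single w 1 = m :=
          tsub_add_cancel_of_le hle
        have : Finsupp.mapDomain σ ((m - Finsupp.single w 1) + Finsupp.single w 1) = n := by
          rw [hrec]; exact mem_Tfin.mp hm1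
        rw [Finsupp.mapDomain_add, Finsupp.mapDomain_single] at this
        exact eq_tsub_of_add_eq this
      · intro m' hm'
        rw [Finset.mem_filter]
        constructor
        · rw [mem_Tfin, Finsupp.mapDomain_add, Finsupp.mapDomain_single, mem_Tfin.mp hm']
          exact tsub_add_cancel_of_le (Finsupp.single_le_iff.mpr (by omega))
        · simp
      · intro m hm
        rw [Finset.mem_filter] at hm
        exact tsub_add_cancel_of_le (Finsupp.single_le_iff.mpr (by omega))
      · intro m' _
        exact add_tsub_cancel_right _ _
      · intro m _
        rfl
  exact LinearMap.congr_fun this q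

end Aux

set_option linter.unusedSectionVars false

theorem stmt10 (W X : Type) [Fintype W] [Fintype X] [DecidableEq W] [DecidableEq X]
    (σ : W → X) (hσ : Function.Surjective σ)
    (d : C →ₗ[F2] C) (ρ : W → C →ₗ[F2] C)
    (hC : IsBddAboveComplex C d)
    (hsq : ∀ w, (ρ w).comp (ρ w) = 0)
    (hcomm : ∀ w w', (ρ w).comp (ρ w') = (ρ w').comp (ρ w))
    (hchain : ∀ w, (ρ w).comp d = d.comp (ρ w)) :
    ∃ Rσ : Rgen X →ₐ[F2] Rgen W,
      (∀ x : X, Rσ (rgen x) = ∑ w ∈ Finset.univ.filter (fun w => σ w = x), rgen w) ∧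
      ∃ Ξσ : XiX X →ₗ[F2] XiX W,
        (∀ n : X →₀ ℕ,
          Ξσ (ximon n) = ∑ᶠ m ∈ {m : W →₀ ℕ | Finsupp.mapDomain σ m = n}, ximon m) ∧
        -- σ̄ = Id_C ⊗ R_σ ⊗ Ξ_σ is a chain map …
        (TensorProduct.map (TensorProduct.map Rσ.toLinearMap Ξσ) LinearMap.id).comp
            (delBar X C d fun x => ∑ w ∈ Finset.univ.filter (fun w => σ w = x), ρ w) =
          (delBar W C d ρ).comp
            (TensorProduct.map (TensorProduct.map Rσ.toLinearMap Ξσ) LinearMap.id) ∧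
        -- … and is R_X-linear, R_X acting on C̄_W through R_σ
        ∀ x : X,
          (TensorProduct.map (TensorProduct.map Rσ.toLinearMap Ξσ) LinearMap.id).comp
              (midMul X C (rgen x)) =
            (midMul W C (Rσ (rgen x))).comp
              (TensorProduct.map (TensorProduct.map Rσ.toLinearMap Ξσ) LinearMap.id) := by
  classical
  refine ⟨RSigma σ, RSigma_rgen σ, XiSigma σ, XiSigma_spec σ, ?_, ?_⟩
  · -- chain map
    apply TensorProduct.ext'
    intro rq c
    induction rq using TensorProduct.induction_on with
    | zero => simp
    | add a b ha hb =>
        simp only [TensorProduct.add_tmul, map_add, LinearMap.comp_apply] at ha hb ⊢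
        rw [ha, hb]
    | tmul r q =>
        simp only [delBar, LinearMap.comp_apply, LinearMap.add_apply, LinearMap.coe_sum,
          Finset.sum_apply, TensorProduct.map_tmul, LinearMap.mulLeft_apply,
          LinearMap.id_coe, id_eq, map_add, map_sum, AlgHom.toLinearMap_apply]
        congr 1
        rw [← Finset.sum_fiberwise (Finset.univ : Finset W) σ
          (fun w => ((rgen w * RSigma σ r) ⊗ₜ[F2] (xiMul w (XiSigma σ q))) ⊗ₜ[F2] c +
            ((RSigma σ r) ⊗ₜ[F2] (xiMul w (XiSigma σ q))) ⊗ₜ[F2] (ρ w c))]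
        refine Finset.sum_congr rfl fun x _ => ?_
        have hAr : RSigma σ (rgen x * r)
            = ∑ w ∈ Finset.univ.filter (fun w => σ w = x), rgen w * RSigma σ r := by
          rw [map_mul, RSigma_rgen, Finset.sum_mul]
        rw [Finset.sum_add_distrib, hAr, TensorProduct.sum_tmul, TensorProduct.sum_tmul,
          TensorProduct.tmul_sum]
        congr 1
        · exact Finset.sum_congr rfl fun w hw => by
            rw [Finset.mem_filter] at hw; rw [xiMul_XiSigma σ w q, hw.2]
        · exact Finset.sum_congr rfl fun w hw => by
            rw [Finset.mem_filter] at hw; rw [xiMul_XiSigma σ w q, hw.2]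
  · -- R_X-linearity
    intro x
    apply TensorProduct.ext'
    intro rq c
    induction rq using TensorProduct.induction_on with
    | zero => simp
    | add a b ha hb =>
        simp only [TensorProduct.add_tmul, map_add, LinearMap.comp_apply] at ha hb ⊢
        rw [ha, hb]
    | tmul r q =>
        simp only [midMul, LinearMap.comp_apply, TensorProduct.map_tmul,
          LinearMap.mulLeft_apply, LinearMap.id_coe, id_eq, AlgHom.toLinearMap_apply,
          map_mul]
end
end

section
/- Let F = ℤ/2ℤ and R₂ = F[X₁,X₂]/(X₁²,X₂²). Consider the free R₂-resolution P• : ⋯ →^{X₁+X₂} R₂ →^{X₁+X₂} R₂ →^{X₁+X₂} R₂ of M = R₂/(X₁+X₂) (with appropriate grading shifts), and the chain map g : P• → P• given in each degree n ≤ -1 by the identity map P_n → P_{n+1} (shifting homological degree by +1) and zero out of P_0. Then g is a chain map of R₂-complexes, and after applying −⊗_{R₂}F[X]/(X²) (where X₁,X₂ both act as X) and taking homology, the induced map on H(M ⊗^L_{R₂} F[X]/X²) is nonzero. In particular, g represents a nonzero morphism M → M[1] in the derived category of R₂-modules. -/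
/-!
STATEMENT 16: Let F = ℤ/2ℤ, R₂ = F[X₁,X₂]/(X₁²,X₂²), s = X₁+X₂, and consider the free
resolution P• : ⋯ →^{s} R₂ →^{s} R₂ of M = R₂/(s) (we index the copies of R₂ by k ∈ ℕ,
with differential multiplication by s from the (k+1)-st copy to the k-th).  Let g be the
degree +1 map given by the identity P_k → P_{k-1} for k ≥ 1 and zero out of P_0.  Then:
(i) g is a chain map of R₂-complexes;
(ii) after base change along R₂ → F[X]/(X²) (X₁,X₂ ↦ X) the differential becomes zero
and the maps induced by g on homology are nonzero;
(iii) g is not null-homotopic, i.e. it represents a nonzero morphism M → M[1] in the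
derived category of R₂-modules.
-/

set_option synthInstance.maxHeartbeats 1000000
set_option maxHeartbeats 1000000

noncomputable section

abbrev Rtwo : Type :=
  MvPolynomial (Fin 2) F2 ⧸
    Ideal.span {(MvPolynomial.X 0 : MvPolynomial (Fin 2) F2) ^ 2, (MvPolynomial.X 1) ^ 2}

def x1R : Rtwo := Ideal.Quotient.mk _ (MvPolynomial.X 0)
def x2R : Rtwo := Ideal.Quotient.mk _ (MvPolynomial.X 1)

/-- `s = X₁ + X₂`. -/
def sR : Rtwo := x1R + x2R

/-- The differential of `P•`: multiplication by `s`, as an `R₂`-linear map. -/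
def dP : Rtwo →ₗ[Rtwo] Rtwo := LinearMap.lsmul Rtwo Rtwo sR

/-- The degree `+1` map `g`: the identity `P_k → P_{k-1}` for `k ≥ 1`, zero out of `P_0`. -/
def gP : ℕ → (Rtwo →ₗ[Rtwo] Rtwo) := fun k => if k = 0 then 0 else LinearMap.id

/-- `B = F[X]/(X²)`, the base change of `R₂` collapsing `X₁, X₂` to `X`. -/
abbrev Bsq : Type := Polynomial F2 ⧸ Ideal.span {(Polynomial.X : Polynomial F2) ^ 2}

def xB : Bsq := Ideal.Quotient.mk _ Polynomial.X


lemma x1R_sq : x1R ^ 2 = 0 := by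
  rw [x1R, ← map_pow, Ideal.Quotient.eq_zero_iff_mem]
  exact Ideal.subset_span (by simp)

lemma x2R_sq : x2R ^ 2 = 0 := by
  rw [x2R, ← map_pow, Ideal.Quotient.eq_zero_iff_mem]
  exact Ideal.subset_span (by simp)

lemma two_Rtwo : (2 : Rtwo) = 0 := by
  have h : (algebraMap F2 Rtwo) 2 = (2 : Rtwo) := map_ofNat _ 2
  rw [← h, show (2 : F2) = 0 by decide, map_zero]

lemma sR_sq : sR ^ 2 = 0 := by
  have h : sR ^ 2 = x1R ^ 2 + x2R ^ 2 + 2 * (x1R * x2R) := by rw [sR]; ring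
  rw [h, x1R_sq, x2R_sq, two_Rtwo]; ring

/-- Evaluation at 0 shows `Rtwo` is nontrivial. -/
def evR : Rtwo →ₐ[F2] F2 :=
  Ideal.Quotient.liftₐ _ (MvPolynomial.aeval (fun _ => 0)) (fun a ha => by
    have h : Ideal.span {(MvPolynomial.X 0 : MvPolynomial (Fin 2) F2) ^ 2,
        (MvPolynomial.X 1) ^ 2} ≤
        RingHom.ker (MvPolynomial.aeval (fun _ : Fin 2 => (0 : F2))).toRingHom := by
      rw [Ideal.span_le]
      rintro x hx
      simp only [Set.mem_insert_iff, Set.mem_singleton_iff] at hx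
      rcases hx with rfl | rfl <;> simp [RingHom.mem_ker]
    exact h ha)

instance : Nontrivial Rtwo := by
  refine ⟨1, 0, fun h => ?_⟩
  have := congrArg evR h
  simp at this

lemma xB_sq : xB ^ 2 = 0 := by
  rw [xB, ← map_pow, Ideal.Quotient.eq_zero_iff_mem]
  exact Ideal.subset_span rfl

def evB : Bsq →ₐ[F2] F2 :=
  Ideal.Quotient.liftₐ _ (Polynomial.aeval 0) (fun a ha => by
    have h : Ideal.span {(Polynomial.X : Polynomial F2) ^ 2} ≤
        RingHom.ker (Polynomial.aeval (0 : F2)).toRingHom := by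
      rw [Ideal.span_le]
      rintro x rfl
      simp [RingHom.mem_ker]
    exact h ha)

instance : Nontrivial Bsq := by
  refine ⟨1, 0, fun h => ?_⟩
  have := congrArg evB h
  simp at this

def piR : Rtwo →ₐ[F2] Bsq :=
  Ideal.Quotient.liftₐ _ (MvPolynomial.aeval (fun _ => xB)) (fun a ha => by
    have h : Ideal.span {(MvPolynomial.X 0 : MvPolynomial (Fin 2) F2) ^ 2,
        (MvPolynomial.X 1) ^ 2} ≤
        RingHom.ker (MvPolynomial.aeval (fun _ : Fin 2 => xB)).toRingHom := by
      rw [Ideal.span_le]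
      rintro x hx
      simp only [Set.mem_insert_iff, Set.mem_singleton_iff] at hx
      rcases hx with rfl | rfl <;> simp [RingHom.mem_ker, xB_sq]
    exact h ha)

lemma piR_x1 : piR x1R = xB := by
  show (MvPolynomial.aeval (fun _ : Fin 2 => xB)) (MvPolynomial.X 0 : MvPolynomial (Fin 2) F2) = xB; simp

lemma piR_x2 : piR x2R = xB := by
  show (MvPolynomial.aeval (fun _ : Fin 2 => xB)) (MvPolynomial.X 1 : MvPolynomial (Fin 2) F2) = xB; simp

lemma two_Bsq : (2 : Bsq) = 0 := by
  have h : (algebraMap F2 Bsq) 2 = (2 : Bsq) := map_ofNat _ 2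
  rw [← h, show (2 : F2) = 0 by decide, map_zero]

theorem stmt16 :
    -- (i) g is a chain map (the square at the tail of the complex commutes trivially
    -- since the target of g out of P₀ is the zero module)
    (∀ k : ℕ, 1 ≤ k → (gP k).comp dP = dP.comp (gP (k + 1))) ∧
    (gP 0).comp dP = 0 ∧
    -- (ii) after base change along π : R₂ → F[X]/X², the differential becomes zero,
    -- so homology is the complex itself, and g induces nonzero maps on homology
    (∃ π : Rtwo →ₐ[F2] Bsq, π x1R = xB ∧ π x2R = xB ∧
      π sR = 0 ∧
      ∀ k : ℕ, 1 ≤ k →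
        (LinearMap.mulLeft F2 (π ((gP k) 1)) : Bsq →ₗ[F2] Bsq) ≠ 0) ∧
    -- (iii) g is not null-homotopic over R₂ (nonzero in the derived category)
    ¬ ∃ H : ℕ → (Rtwo →ₗ[Rtwo] Rtwo),
        ∀ k : ℕ, gP (k + 1) = dP.comp (H (k + 1)) + (H k).comp dP := by
  refine ⟨?_, ?_, ?_, ?_⟩
  · intro k hk
    have hk0 : k ≠ 0 := by omega
    simp [gP, hk0]
  · simp [gP]
  · refine ⟨piR, piR_x1, piR_x2, ?_, ?_⟩
    · rw [sR, map_add, piR_x1, piR_x2]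
      have h : xB + xB = 2 * xB := by ring
      rw [h, two_Bsq, zero_mul]
    · intro k hk hz
      have hk0 : k ≠ 0 := by omega
      have h1 : (gP k) 1 = 1 := by simp [gP, hk0]
      have := congrArg (fun f => f 1) hz
      simp [h1, LinearMap.mulLeft] at this
  · rintro ⟨H, hH⟩
    have h0 := hH 0
    have h1 : (gP 1) (1 : Rtwo) = 1 := by simp [gP]
    have heq := congrArg (fun f => f (1 : Rtwo)) h0
    simp only [h1, LinearMap.add_apply, LinearMap.comp_apply] at heq
    have hd2 : ∀ x : Rtwo, dP x = sR * x := fun x => by simp [dP, smul_eq_mul]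
    have hlin : ∀ (L : Rtwo →ₗ[Rtwo] Rtwo) (r : Rtwo), L r = r * L 1 := fun L r => by
      rw [← smul_eq_mul, ← map_smul, smul_eq_mul, mul_one]
    rw [hd2, hd2, mul_one, hlin (H 0) sR] at heq
    set c : Rtwo := (H (0 + 1)) 1 + (H 0) 1 with hc
    have key : (1 : Rtwo) = sR * c := by rw [hc, mul_add]; exact heq
    have contra : (1 : Rtwo) = 0 := by
      have h2 : (1 : Rtwo) * 1 = (sR * c) * (sR * c) := by rw [← key]
      calc (1 : Rtwo) = 1 * 1 := (one_mul 1).symm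
        _ = (sR * c) * (sR * c) := h2
        _ = sR ^ 2 * (c * c) := by ring
        _ = 0 := by rw [sR_sq]; ring
    exact one_ne_zero contra
end
end
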